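/- If G is a finite group satisfying o(xy) ≤ max{o(x), o(y)} for all x, y ∈ G, then there is a prime p dividing |G| such that the Fitting subgroup F(G) equals O_p(G) (in particular, F(G) is a p-group). -/

import Mathlib

/-- The Fitting subgroup: the largest normal nilpotent subgroup of `G`. -/
def fittingSubgroup (G : Type*) [Group G] : Subgroup G :=
  sSup {H : Subgroup G | H.Normal ∧ Group.IsNilpotent H}

/-- The `p`-core: the largest normal `p`-subgroup of `G`. -/
def pCore (p : ℕ) (G : Type*) [Group G] : Subgroup G :=
  sSup {H : Subgroup G | H.Normal ∧ IsPGroup p H}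

/-- Under the hypothesis, there are no commuting elements of distinct prime orders. -/
lemma aux_no_commute {G : Type*} [Group G]
    (h : ∀ x y : G, orderOf (x * y) ≤ max (orderOf x) (orderOf y))
    {x y : G} {p q : ℕ} (hp : p.Prime) (hq : q.Prime) (hpq : p ≠ q)
    (hc : Commute x y) (hx : orderOf x = p) (hy : orderOf y = q) : False := by
  have hco : (orderOf x).Coprime (orderOf y) := by
    rw [hx, hy]; exact (Nat.coprime_primes hp hq).2 hpq
  have hmul := hc.orderOf_mul_eq_mul_orderOf_of_coprime hco
  have hle := h x y
  rw [hmul, hx, hy] at hle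
  have h2p := hp.two_le
  have h2q := hq.two_le
  have h1 : p < p * q := by nlinarith
  have h2 : q < p * q := by nlinarith
  have := max_lt h1 h2
  omega

/-- In a finite nilpotent subgroup, all primes dividing the order coincide. -/
lemma aux_unique_prime {G : Type*} [Group G] [Finite G]
    (h : ∀ x y : G, orderOf (x * y) ≤ max (orderOf x) (orderOf y))
    (N : Subgroup G) (hN : Group.IsNilpotent N) {p q : ℕ} (hp : p.Prime) (hq : q.Prime)
    (hpN : p ∣ Nat.card N) (hqN : q ∣ Nat.card N) : p = q := by
  by_contra hpq
  haveI : Fact p.Prime := ⟨hp⟩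
  haveI : Fact q.Prime := ⟨hq⟩
  obtain ⟨x, hx⟩ := exists_prime_orderOf_dvd_card' (G := N) p hpN
  obtain ⟨y, hy⟩ := exists_prime_orderOf_dvd_card' (G := N) q hqN
  have hPx : IsPGroup p (Subgroup.zpowers x) :=
    IsPGroup.of_card (by rw [Nat.card_zpowers, hx, pow_one])
  have hQy : IsPGroup q (Subgroup.zpowers y) :=
    IsPGroup.of_card (by rw [Nat.card_zpowers, hy, pow_one])
  obtain ⟨P, hP⟩ := hPx.exists_le_sylow
  obtain ⟨Q, hQ⟩ := hQy.exists_le_sylow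
  have hnormal := ((isNilpotent_of_finite_tfae (G := N)).out 0 3).mp hN
  have hPn : (P : Subgroup N).Normal := hnormal p ⟨hp⟩ P
  have hQn : (Q : Subgroup N).Normal := hnormal q ⟨hq⟩ Q
  have hdis : Disjoint (P : Subgroup N) (Q : Subgroup N) :=
    IsPGroup.disjoint_of_ne p q hpq _ _ P.isPGroup' Q.isPGroup'
  have hc : Commute x y :=
    Subgroup.commute_of_normal_of_disjoint _ _ hPn hQn hdis x y
      (hP (Subgroup.mem_zpowers x)) (hQ (Subgroup.mem_zpowers y))
  have hc' : Commute (x : G) (y : G) := hc.map N.subtype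
  exact aux_no_commute h hp hq hpq hc'
    (by rw [Subgroup.orderOf_coe, hx]) (by rw [Subgroup.orderOf_coe, hy])

/-- A finite nilpotent subgroup with `p` dividing its order is a `p`-group. -/
lemma aux_pgroup {G : Type*} [Group G] [Finite G]
    (h : ∀ x y : G, orderOf (x * y) ≤ max (orderOf x) (orderOf y))
    (N : Subgroup G) (hN : Group.IsNilpotent N) {p : ℕ} (hp : p.Prime)
    (hpN : p ∣ Nat.card N) : IsPGroup p N := by
  have hpos : Nat.card N ≠ 0 := Nat.card_pos.ne'
  have hcard := Nat.eq_prime_pow_of_unique_prime_dvd hpos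
    (fun {d} hd hdvd => aux_unique_prime h N hN hd hp hdvd hpN)
  exact IsPGroup.of_card hcard

theorem stmt_12 {G : Type*} [Group G] [Finite G] [Nontrivial G]
    (h : ∀ x y : G, orderOf (x * y) ≤ max (orderOf x) (orderOf y)) :
    ∃ p : ℕ, p.Prime ∧ p ∣ Nat.card G ∧
      fittingSubgroup G = pCore p G ∧ IsPGroup p (fittingSubgroup G) := by
  classical
  by_cases hS : ∀ H ∈ {H : Subgroup G | H.Normal ∧ Group.IsNilpotent H}, H = (⊥ : Subgroup G)
  · -- trivial Fitting subgroup
    obtain ⟨p, hp, hpdvd⟩ := Nat.exists_prime_and_dvd (n := Nat.card G) (by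
      have := Finite.one_lt_card_iff_nontrivial.mpr ‹Nontrivial G›
      omega)
    haveI : Fact p.Prime := ⟨hp⟩
    have hfit : fittingSubgroup G = ⊥ := by
      rw [fittingSubgroup]; exact sSup_eq_bot.mpr hS
    have hcore : pCore p G = ⊥ := by
      rw [pCore]
      refine sSup_eq_bot.mpr fun H hH => hS H ⟨hH.1, hH.2.isNilpotent⟩
    exact ⟨p, hp, hpdvd, by rw [hfit, hcore], by rw [hfit]; exact IsPGroup.of_bot⟩
  · push_neg at hS
    obtain ⟨H, hHS, hHbot⟩ := hS
    have hcard : Nat.card H ≠ 1 := fun hc => hHbot (Subgroup.card_eq_one.mp hc)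
    obtain ⟨p, hp, hpH⟩ := Nat.exists_prime_and_dvd hcard
    haveI : Fact p.Prime := ⟨hp⟩
    have hpG : p ∣ Nat.card G := hpH.trans (Subgroup.card_subgroup_dvd_card H)
    have hHp : IsPGroup p H := aux_pgroup h H hHS.2 hp hpH
    -- every normal nilpotent subgroup is a p-group
    have key : ∀ K : Subgroup G, K.Normal → Group.IsNilpotent K → IsPGroup p K := by
      intro K hKn hKnil
      by_cases hKbot : K = ⊥
      · subst hKbot; exact IsPGroup.of_bot
      · have hcK : Nat.card K ≠ 1 := fun hc => hKbot (Subgroup.card_eq_one.mp hc)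
        obtain ⟨q, hq, hqK⟩ := Nat.exists_prime_and_dvd hcK
        have hKq : IsPGroup q K := aux_pgroup h K hKnil hq hqK
        by_cases hpq : q = p
        · subst hpq; exact hKq
        · exfalso
          haveI : Fact q.Prime := ⟨hq⟩
          have hdis : Disjoint H K :=
            IsPGroup.disjoint_of_ne p q (Ne.symm hpq) H K hHp hKq
          obtain ⟨x, hx⟩ := exists_prime_orderOf_dvd_card' (G := H) p hpH
          obtain ⟨y, hy⟩ := exists_prime_orderOf_dvd_card' (G := K) q hqK
          have hc : Commute (x : G) (y : G) :=
            Subgroup.commute_of_normal_of_disjoint H K hHS.1 hKn hdis _ _ x.2 y.2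
          exact aux_no_commute h hp hq (Ne.symm hpq) hc
            (by rw [Subgroup.orderOf_coe, hx]) (by rw [Subgroup.orderOf_coe, hy])
    have hST : {K : Subgroup G | K.Normal ∧ Group.IsNilpotent K}
        = {K : Subgroup G | K.Normal ∧ IsPGroup p K} := by
      ext K
      exact ⟨fun hK => ⟨hK.1, key K hK.1 hK.2⟩, fun hK => ⟨hK.1, hK.2.isNilpotent⟩⟩
    have heq : fittingSubgroup G = pCore p G := by
      rw [fittingSubgroup, pCore, hST]
    -- a maximal normal p-subgroup absorbs all others
    obtain ⟨M, hMT, hMmax⟩ := Set.Finite.exists_maximal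
      (s := {K : Subgroup G | K.Normal ∧ IsPGroup p K}) (Set.toFinite _)
      ⟨⊥, inferInstance, IsPGroup.of_bot⟩
    have hle : ∀ K ∈ {K : Subgroup G | K.Normal ∧ IsPGroup p K}, K ≤ M := by
      intro K hK
      haveI := hK.1
      haveI := hMT.1
      have hsup : K ⊔ M ∈ {K : Subgroup G | K.Normal ∧ IsPGroup p K} :=
        ⟨Subgroup.sup_normal K M, IsPGroup.to_sup_of_normal_right hK.2 hMT.2⟩
      have hMe : M = K ⊔ M := le_antisymm le_sup_right (hMmax hsup le_sup_right)
      exact hMe ▸ le_sup_left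
    have hcore : pCore p G = M := by
      rw [pCore]
      exact le_antisymm (sSup_le hle) (le_sSup hMT)
    exact ⟨p, hp, hpG, heq, by rw [heq, hcore]; exact hMT.2⟩
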